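/- arXiv:1604.06842 — 3 statements merged into one kernel-verified Lean document; each statement's English description precedes it below -/
import Mathlib

section
/- Let H be an N×M complex matrix and let B be an M×D complex matrix of rank D (a square-root factor of the transmit covariance S_x = B Bᴴ). Suppose the N×D matrix Φ = H B admits a truncated singular value decomposition Φ = U_Φ Λ_Φ V_Φᴴ, where U_Φ is an N×D complex matrix with U_Φᴴ U_Φ = I, V_Φ is a D×D unitary matrix (V_Φᴴ V_Φ = V_Φ V_Φᴴ = I), and Λ_Φ = diag(φ₁,…,φ_D) with φ_d > 0 for all d. Define the linear precoder V = B V_Φ and the linear decoder Uᴴ = U_Φᴴ. Then simultaneously: (i) Uᴴ H V = Λ_Φ = diag(φ₁,…,φ_D) (channel diagonalization); (ii) V Vᴴ = B Bᴴ = S_x (transmit covariance condition); and (iii) ∑_{d=1}^{D} log₂(1 + |u_dᴴ H v_d|² / ‖u_d‖²) = log₂ det(I + H S_x Hᴴ), where u_d and v_d denote the d-th columns of U and V (capacity-achieving condition); equivalently, det(I_N + H S_x Hᴴ) = ∏_{d=1}^{D} (1 + φ_d²). -/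
open Matrix

/-- Given a channel `H`, a full-column-rank square-root factor `B` of the
transmit covariance `Sx = B * Bᴴ`, and a truncated SVD `H * B = UΦ * Λ_Φ * VΦᴴ` with
`UΦᴴ UΦ = I`, `VΦ` unitary, and `Λ_Φ = diag(φ₁,…,φ_D)` positive, the precoder `V = B * VΦ`
and decoder `Uᴴ = UΦᴴ` (i) diagonalize the channel, (ii) satisfy `V Vᴴ = Sx`, and
(iii) achieve the capacity `log₂ det(I + H Sx Hᴴ)`; equivalently
`det(I + H Sx Hᴴ) = ∏ d (1 + φ_d²)`. -/
theorem stmt_0 {N M D : ℕ}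
    (H : Matrix (Fin N) (Fin M) ℂ) (B : Matrix (Fin M) (Fin D) ℂ)
    (hBrank : B.rank = D)
    (Sx : Matrix (Fin M) (Fin M) ℂ) (hSx : Sx = B * Bᴴ)
    (UΦ : Matrix (Fin N) (Fin D) ℂ) (VΦ : Matrix (Fin D) (Fin D) ℂ) (φ : Fin D → ℝ)
    (hφ : ∀ d, 0 < φ d)
    (hUΦ : UΦᴴ * UΦ = 1) (hVΦ₁ : VΦᴴ * VΦ = 1) (hVΦ₂ : VΦ * VΦᴴ = 1)
    (hSVD : H * B = UΦ * Matrix.diagonal (fun d => (φ d : ℂ)) * VΦᴴ)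
    (V : Matrix (Fin M) (Fin D) ℂ) (hV : V = B * VΦ)
    (U : Matrix (Fin N) (Fin D) ℂ) (hU : U = UΦ) :
    -- (i) channel diagonalization
    Uᴴ * H * V = Matrix.diagonal (fun d => (φ d : ℂ)) ∧
    -- (ii) transmit covariance condition
    V * Vᴴ = Sx ∧
    -- (iii) capacity-achieving condition
    (∑ d : Fin D,
        Real.logb 2 (1 +
          ‖star (fun i => U i d) ⬝ᵥ (H *ᵥ fun j => V j d)‖ ^ 2 /
            (∑ i, ‖U i d‖ ^ 2))) =
      Real.logb 2 ((1 + H * Sx * Hᴴ).det.re) ∧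
    -- equivalently, det(I + H Sx Hᴴ) = ∏ d (1 + φ_d²)
    (1 + H * Sx * Hᴴ).det = ∏ d : Fin D, (1 + (φ d : ℂ) ^ 2) := by
  subst hU hV hSx
  set Λ : Matrix (Fin D) (Fin D) ℂ := Matrix.diagonal (fun d => (φ d : ℂ)) with hΛ
  -- (i)
  have hi : Uᴴ * H * (B * VΦ) = Λ := by
    calc Uᴴ * H * (B * VΦ) = Uᴴ * (H * B) * VΦ := by
          simp only [Matrix.mul_assoc]
      _ = (Uᴴ * U) * (Λ * (VΦᴴ * VΦ)) := by
          rw [hSVD]; simp only [Matrix.mul_assoc]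
      _ = Λ := by rw [hUΦ, hVΦ₁, Matrix.one_mul, Matrix.mul_one]
  -- (ii)
  have hii : (B * VΦ) * (B * VΦ)ᴴ = B * Bᴴ := by
    rw [Matrix.conjTranspose_mul]
    calc B * VΦ * (VΦᴴ * Bᴴ) = B * ((VΦ * VΦᴴ) * Bᴴ) := by
          simp only [Matrix.mul_assoc]
      _ = B * Bᴴ := by rw [hVΦ₂, Matrix.one_mul]
  -- (iv) determinant identity
  have hΛH : Λᴴ = Λ := by
    simp [hΛ, Matrix.diagonal_conjTranspose]
  have hdet : (1 + H * (B * Bᴴ) * Hᴴ).det = ∏ d : Fin D, (1 + (φ d : ℂ) ^ 2) := by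
    have h1 : H * (B * Bᴴ) * Hᴴ = (H * B) * (H * B)ᴴ := by
      rw [Matrix.conjTranspose_mul]; simp only [Matrix.mul_assoc]
    rw [h1, Matrix.det_one_add_mul_comm]
    have h2 : (H * B)ᴴ * (H * B) = (VΦ * (Λ * Λ)) * VΦᴴ := by
      rw [hSVD]
      simp only [Matrix.conjTranspose_mul, Matrix.conjTranspose_conjTranspose, hΛH]
      calc VΦ * (Λ * Uᴴ) * (U * Λ * VΦᴴ) = VΦ * (Λ * ((Uᴴ * U) * (Λ * VΦᴴ))) := by
            simp only [Matrix.mul_assoc]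
        _ = VΦ * (Λ * Λ) * VΦᴴ := by
            rw [hUΦ, Matrix.one_mul]; simp only [Matrix.mul_assoc]
    rw [h2, Matrix.det_one_add_mul_comm, ← Matrix.mul_assoc, hVΦ₁, Matrix.one_mul]
    have h3 : (1 : Matrix (Fin D) (Fin D) ℂ) + Λ * Λ
        = Matrix.diagonal (fun d => 1 + (φ d : ℂ) ^ 2) := by
      rw [hΛ, Matrix.diagonal_mul_diagonal, ← Matrix.diagonal_one, Matrix.diagonal_add]
      congr 1; funext d; ring
    rw [h3, Matrix.det_diagonal]
  refine ⟨hi, hii, ?_, hdet⟩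
  -- (iii)
  have hnorm : ∀ d, (∑ i, ‖U i d‖ ^ 2) = 1 := by
    intro d
    have h := congrArg (fun A : Matrix (Fin D) (Fin D) ℂ => (A d d).re) hUΦ
    simpa [Matrix.mul_apply, Matrix.conjTranspose_apply, Matrix.one_apply,
      Complex.re_sum, ← Complex.normSq_eq_conj_mul_self, Complex.normSq_eq_norm_sq,
      ← Complex.ofReal_pow, Complex.ofReal_re] using h
  have hdot : ∀ d, star (fun i => U i d) ⬝ᵥ (H *ᵥ fun j => (B * VΦ) j d) = (φ d : ℂ) := by
    intro d
    have h := congrArg (fun A : Matrix (Fin D) (Fin D) ℂ => A d d) hi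
    simp only [hΛ, Matrix.diagonal_apply_eq] at h
    rw [← h]
    simp [Matrix.mul_apply, Matrix.mulVec, dotProduct, Matrix.conjTranspose_apply,
      Finset.mul_sum, Finset.sum_mul, mul_assoc]
    rw [Finset.sum_comm]
    exact Finset.sum_congr rfl fun _ _ => Finset.sum_comm
  have hterm : ∀ d, Real.logb 2 (1 +
      ‖star (fun i => U i d) ⬝ᵥ (H *ᵥ fun j => (B * VΦ) j d)‖ ^ 2 /
        (∑ i, ‖U i d‖ ^ 2)) = Real.logb 2 (1 + φ d ^ 2) := by
    intro d
    rw [hdot d, hnorm d, div_one, Complex.norm_real, Real.norm_eq_abs, sq_abs]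
  have hre : (1 + H * (B * Bᴴ) * Hᴴ).det.re = ∏ d : Fin D, (1 + φ d ^ 2) := by
    rw [hdet]
    rw [show (∏ d : Fin D, (1 + (φ d : ℂ) ^ 2)) = ((∏ d : Fin D, (1 + φ d ^ 2) : ℝ) : ℂ) by
      push_cast; ring]
    exact Complex.ofReal_re _
  rw [hre]
  have hpos : ∀ d ∈ Finset.univ, (1 : ℝ) + φ d ^ 2 ≠ 0 := by
    intro d _
    positivity
  rw [Real.logb_prod _ _ hpos]
  exact Finset.sum_congr rfl fun d _ => hterm d
end

section
/- Let H be an N×M complex matrix and S_x an M×M positive semidefinite Hermitian matrix. Then there exists an M×M positive semidefinite Hermitian matrix S̄_x such that H S̄_x Hᴴ = H S_x Hᴴ (hence det(I + H S̄_x Hᴴ) = det(I + H S_x Hᴴ), i.e., S̄_x achieves the same capacity of the MIMO channel H as S_x) and rank(S̄_x) = rank(H S̄_x). -/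
open Matrix ComplexOrder

private lemma toEuclideanLin_mul_apply {m n p : ℕ}
    (A : Matrix (Fin m) (Fin n) ℂ) (B : Matrix (Fin n) (Fin p) ℂ)
    (x : EuclideanSpace ℂ (Fin p)) :
    toEuclideanLin (A * B) x = toEuclideanLin A (toEuclideanLin B x) := by
  simp [toEuclideanLin_apply, mulVec_mulVec]

/-- For any channel `H` and positive semidefinite transmit covariance
`Sx`, there exists a positive semidefinite `S̄x` with `H S̄x Hᴴ = H Sx Hᴴ`
(hence the same capacity `det(I + H S̄x Hᴴ) = det(I + H Sx Hᴴ)`) and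
`rank(S̄x) = rank(H S̄x)`. -/
theorem stmt_7 {N M : ℕ}
    (H : Matrix (Fin N) (Fin M) ℂ) (Sx : Matrix (Fin M) (Fin M) ℂ)
    (hSx : Sx.PosSemidef) :
    ∃ Sbar : Matrix (Fin M) (Fin M) ℂ,
      Sbar.PosSemidef ∧
      H * Sbar * Hᴴ = H * Sx * Hᴴ ∧
      (1 + H * Sbar * Hᴴ).det = (1 + H * Sx * Hᴴ).det ∧
      Sbar.rank = (H * Sbar).rank := by
  classical
  open scoped MatrixOrder in
  set K := CFC.sqrt Sx with hKdef
  open scoped MatrixOrder in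
  have hKpsd : K.PosSemidef := (CFC.sqrt_nonneg Sx).posSemidef
  have hKherm : Kᴴ = K := hKpsd.isHermitian
  open scoped MatrixOrder in
  have hKK : K * K = Sx := CFC.sqrt_mul_sqrt_self Sx hSx.nonneg
  -- the range of `K * Hᴴ` as a subspace of Euclidean space
  set A : Matrix (Fin M) (Fin N) ℂ := K * Hᴴ with hAdef
  set U : Submodule ℂ (EuclideanSpace ℂ (Fin M)) :=
    LinearMap.range (toEuclideanLin A) with hUdef
  -- the orthogonal projection onto `U`, as a matrix
  set Pl : EuclideanSpace ℂ (Fin M) →ₗ[ℂ] EuclideanSpace ℂ (Fin M) :=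
    ((U.subtypeL ∘L U.orthogonalProjectionOnto : _ →L[ℂ] _) :
      EuclideanSpace ℂ (Fin M) →ₗ[ℂ] EuclideanSpace ℂ (Fin M)) with hPldef
  set P : Matrix (Fin M) (Fin M) ℂ := toEuclideanLin.symm Pl with hPdef
  have hPapp : ∀ x, toEuclideanLin P x = Pl x := by
    intro x; rw [hPdef, LinearEquiv.apply_symm_apply]
  -- P is Hermitian
  have hPherm : P.IsHermitian := by
    rw [isHermitian_iff_isSymmetric]
    intro x y
    rw [hPapp, hPapp]
    exact U.starProjection_isSymmetric x y
  -- P fixes the range of A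
  have hPA : P * A = A := by
    apply toEuclideanLin.injective
    ext1 x
    rw [toEuclideanLin_mul_apply, hPapp]
    have hmem : toEuclideanLin A x ∈ U := ⟨x, rfl⟩
    exact Submodule.starProjection_eq_self_iff.mpr hmem
  -- P is idempotent
  have hPP : P * P = P := by
    apply toEuclideanLin.injective
    ext1 x
    rw [toEuclideanLin_mul_apply, hPapp, hPapp]
    have hmem : Pl x ∈ U := by
      simp only [hPldef]
      exact Submodule.coe_mem _
    exact Submodule.starProjection_eq_self_iff.mpr hmem
  -- P maps into the range of A (matrix-level)
  have hPrange : ∀ v : Fin M → ℂ, ∃ z : Fin N → ℂ, P *ᵥ v = A *ᵥ z := by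
    intro v
    have hmem : Pl ((WithLp.equiv 2 (Fin M → ℂ)).symm v) ∈ U := by
      simp only [hPldef]; exact Submodule.coe_mem _
    obtain ⟨z, hz⟩ := hmem
    refine ⟨(WithLp.equiv 2 (Fin N → ℂ)) z, ?_⟩
    have h1 : toEuclideanLin P ((WithLp.equiv 2 (Fin M → ℂ)).symm v)
        = toEuclideanLin A z := by rw [hPapp, hz]
    have := congrArg (WithLp.equiv 2 (Fin M → ℂ)) h1
    simpa [toEuclideanLin_apply] using this
  refine ⟨K * P * K, ?_, ?_, ?_, ?_⟩
  · -- PSD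
    have : K * P * K = (P * K)ᴴ * (P * K) := by
      rw [conjTranspose_mul, hKherm, hPherm.eq]
      calc K * P * K = K * (P * P) * K := by rw [hPP]
      _ = K * P * (P * K) := by simp only [Matrix.mul_assoc]
    rw [this]
    exact posSemidef_conjTranspose_mul_self _
  · -- equal channel output covariance
    calc H * (K * P * K) * Hᴴ = H * K * (P * (K * Hᴴ)) := by
          simp only [Matrix.mul_assoc]
      _ = H * K * (K * Hᴴ) := by rw [← hAdef, hPA]
      _ = H * Sx * Hᴴ := by rw [← hKK]; simp only [Matrix.mul_assoc]
  · -- equal capacity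
    have : H * (K * P * K) * Hᴴ = H * Sx * Hᴴ := by
      calc H * (K * P * K) * Hᴴ = H * K * (P * (K * Hᴴ)) := by
            simp only [Matrix.mul_assoc]
        _ = H * K * (K * Hᴴ) := by rw [← hAdef, hPA]
        _ = H * Sx * Hᴴ := by rw [← hKK]; simp only [Matrix.mul_assoc]
    rw [this]
  · -- rank equality via equality of kernels
    have hker : LinearMap.ker (K * P * K).mulVecLin
        = LinearMap.ker (H * (K * P * K)).mulVecLin := by
      ext x
      simp only [LinearMap.mem_ker, mulVecLin_apply]
      constructor
      · intro hx
        rw [← mulVec_mulVec, hx, mulVec_zero]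
      · intro hx
        obtain ⟨z, hz⟩ := hPrange (K *ᵥ x)
        have hHK : Aᴴ = H * K := by
          rw [hAdef, conjTranspose_mul, hKherm, conjTranspose_conjTranspose]
        have hAz : A *ᵥ z = 0 := by
          have h0 : (Aᴴ * A) *ᵥ z = 0 := by
            have heq : (H * (K * P * K)) *ᵥ x = (Aᴴ * A) *ᵥ z := by
              calc (H * (K * P * K)) *ᵥ x
                  = (H * K) *ᵥ (P *ᵥ (K *ᵥ x)) := by
                    rw [mulVec_mulVec, mulVec_mulVec]
                    simp only [Matrix.mul_assoc]
                _ = (H * K) *ᵥ (A *ᵥ z) := by rw [hz]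
                _ = (Aᴴ * A) *ᵥ z := by rw [hHK, mulVec_mulVec]
            rw [← heq, hx]
          exact (conjTranspose_mul_self_mulVec_eq_zero A z).mp h0
        calc (K * P * K) *ᵥ x = K *ᵥ (P *ᵥ (K *ᵥ x)) := by
              rw [mulVec_mulVec, mulVec_mulVec]
          _ = K *ᵥ (A *ᵥ z) := by rw [hz]
          _ = 0 := by rw [hAz, mulVec_zero]
    have h1 := (K * P * K).mulVecLin.finrank_range_add_finrank_ker
    have h2 := (H * (K * P * K)).mulVecLin.finrank_range_add_finrank_ker
    rw [hker] at h1
    have : (K * P * K).rank = Module.finrank ℂ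
        (LinearMap.range (K * P * K).mulVecLin) := rfl
    rw [Matrix.rank, Matrix.rank]
    omega
end

section
/- Let H be an N×M complex matrix and S_x an M×M positive semidefinite Hermitian matrix with rank(S_x) = rank(H S_x) = D. Then there exist a precoder V ∈ ℂ^{M×D} and a decoder U ∈ ℂ^{N×D} such that: (i) Uᴴ H V is a diagonal matrix with positive real diagonal entries; (ii) V Vᴴ = S_x; and (iii) ∑_{d=1}^{D} log₂(1 + |u_dᴴ H v_d|²/‖u_d‖²) = log₂ det(I + H S_x Hᴴ), where u_d and v_d denote the d-th columns of U and V. That is, for every channel H and every transmit covariance S_x of the stated rank, there is a linear precoder/decoder pair that diagonalizes the MIMO channel and achieves the channel capacity C(S_x) = log₂ det(I + H S_x Hᴴ). -/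
open Matrix ComplexOrder

private lemma psd_factor {M D : ℕ} {Sx : Matrix (Fin M) (Fin M) ℂ}
    (hSx : Sx.PosSemidef) (hrank1 : Sx.rank = D) :
    ∃ B : Matrix (Fin M) (Fin D) ℂ, B * Bᴴ = Sx := by
  classical
  have hA := hSx.isHermitian
  have hcard : Fintype.card {i // hA.eigenvalues i ≠ 0} = D := by
    rw [← hA.rank_eq_card_non_zero_eigs, hrank1]
  let e : Fin D ≃ {i // hA.eigenvalues i ≠ 0} := (Fintype.equivFinOfCardEq hcard).symm
  set lam := hA.eigenvalues with hlam
  set W : Matrix (Fin M) (Fin M) ℂ := ↑(hA.eigenvectorUnitary) with hW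
  refine ⟨fun m d => W m (e d) * (Real.sqrt (lam (e d)) : ℂ), ?_⟩
  ext m m'
  set f : Fin M → ℂ := fun i => W m i * (lam i : ℂ) * star (W m' i) with hf
  have hRHS : Sx m m' = ∑ i, f i := by
    conv_lhs => rw [hA.spectral_theorem, Unitary.conjStarAlgAut_apply]
    simp only [← hW, ← hlam, Matrix.mul_apply, Matrix.star_apply, Matrix.diagonal_apply,
      Function.comp_apply, hf, mul_ite, mul_zero, ite_mul, zero_mul, Finset.sum_ite_eq,
      Finset.sum_ite_eq', Finset.mem_univ, if_true]
    rfl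
  have hterm : ∀ i : Fin M, f i ≠ 0 → lam i ≠ 0 := by
    intro i h hli; exact h (by simp [hf, hli])
  have h1 : ∑ i ∈ Finset.univ.filter (fun i => lam i ≠ 0), f i = ∑ i : Fin M, f i :=
    Finset.sum_filter_of_ne (fun x _ hx => hterm x hx)
  have h2 : ∑ i ∈ Finset.univ.filter (fun i => lam i ≠ 0), f i
      = ∑ s : {i // lam i ≠ 0}, f ↑s :=
    Finset.sum_subtype _ (by simp) f
  have h3 : ∑ d : Fin D, f ↑(e d) = ∑ s : {i // lam i ≠ 0}, f ↑s :=
    Fintype.sum_equiv e _ _ (fun d => rfl)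
  rw [hRHS, ← h1, h2, ← h3]
  refine Matrix.mul_apply.trans ?_
  refine Finset.sum_congr rfl fun d _ => ?_
  change _ * star (W m' (e d) * (Real.sqrt (lam (e d)) : ℂ)) = _
  set r : ℂ := (Real.sqrt (lam (e d)) : ℂ) with hr
  have hsr : r * star r = (lam (e d) : ℂ) := by
    simp only [hr, Complex.star_def, Complex.conj_ofReal, ← Complex.ofReal_mul,
      Real.mul_self_sqrt (hSx.eigenvalues_nonneg (e d))]
    exact congrArg _ (Real.mul_self_sqrt (hSx.eigenvalues_nonneg (e d)))
  calc (W m (e d) * r) * star (W m' (e d) * r)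
      = (r * star r) * (W m (e d) * star (W m' (e d))) := by
        rw [StarMul.star_mul]; ring
    _ = f (e d) := by rw [hsr, hf]; ring

/-- For every channel `H` and every positive semidefinite transmit
covariance `Sx` with `rank(Sx) = rank(H Sx) = D`, there exist a precoder
`V ∈ ℂ^{M×D}` and a decoder `U ∈ ℂ^{N×D}` such that (i) `Uᴴ H V` is a diagonal matrix
with positive real diagonal entries, (ii) `V Vᴴ = Sx`, and (iii) the achievable
sum-rate `∑ d log₂(1 + |u_dᴴ H v_d|²/‖u_d‖²)` equals the capacity
`log₂ det(I + H Sx Hᴴ)`. -/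
theorem stmt_8 {N M D : ℕ}
    (H : Matrix (Fin N) (Fin M) ℂ) (Sx : Matrix (Fin M) (Fin M) ℂ)
    (hSx : Sx.PosSemidef)
    (hrank1 : Sx.rank = D) (hrank2 : (H * Sx).rank = D) :
    ∃ (V : Matrix (Fin M) (Fin D) ℂ) (U : Matrix (Fin N) (Fin D) ℂ),
      -- (i) Uᴴ H V is diagonal with positive real diagonal entries
      (∃ φ : Fin D → ℝ, (∀ d, 0 < φ d) ∧
        Uᴴ * H * V = Matrix.diagonal (fun d => (φ d : ℂ))) ∧
      -- (ii) transmit covariance condition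
      V * Vᴴ = Sx ∧
      -- (iii) capacity-achieving condition
      (∑ d : Fin D,
          Real.logb 2 (1 +
            ‖star (fun i => U i d) ⬝ᵥ (H *ᵥ fun j => V j d)‖ ^ 2 /
              (∑ i, ‖U i d‖ ^ 2))) =
        Real.logb 2 ((1 + H * Sx * Hᴴ).det.re) := by
  classical
  obtain ⟨B, hBB⟩ := psd_factor hSx hrank1
  set C : Matrix (Fin N) (Fin D) ℂ := H * B with hC
  have hrankC : C.rank = D := by
    refine le_antisymm (by simpa using C.rank_le_width) ?_
    have h1 : H * Sx = C * Bᴴ := by rw [← hBB, hC, Matrix.mul_assoc]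
    calc D = (H * Sx).rank := hrank2.symm
      _ = (C * Bᴴ).rank := by rw [h1]
      _ ≤ C.rank := Matrix.rank_mul_le_left _ _
  have hP : (Cᴴ * C).PosSemidef := Matrix.posSemidef_conjTranspose_mul_self C
  have hPH := hP.isHermitian
  set μ : Fin D → ℝ := hPH.eigenvalues with hμ
  have hμpos : ∀ d, 0 < μ d := by
    intro d
    rcases (hP.eigenvalues_nonneg d).lt_or_eq with h | h
    · exact h
    · exfalso
      have hcard : Fintype.card {i // μ i ≠ 0} = D := by
        rw [← hPH.rank_eq_card_non_zero_eigs, Matrix.rank_conjTranspose_mul_self, hrankC]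
      have hlt : Fintype.card {i // μ i ≠ 0} < Fintype.card (Fin D) :=
        Fintype.card_subtype_lt (x := d) (by simp only [ne_eq, not_not]; exact h.symm)
      simp [hcard] at hlt
  set Q : Matrix (Fin D) (Fin D) ℂ := ↑(hPH.eigenvectorUnitary) with hQ
  have hQ1 : Qᴴ * Q = 1 := by
    rw [← Matrix.star_eq_conjTranspose]
    exact Matrix.mem_unitaryGroup_iff'.mp (hPH.eigenvectorUnitary).2
  have hQ2 : Q * Qᴴ = 1 := by
    rw [← Matrix.star_eq_conjTranspose]
    exact Matrix.mem_unitaryGroup_iff.mp (hPH.eigenvectorUnitary).2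
  have hdiagP : Qᴴ * (Cᴴ * C) * Q = Matrix.diagonal (fun d => (μ d : ℂ)) := by
    rw [← Matrix.star_eq_conjTranspose, hμ]
    have := hPH.conjStarAlgAut_star_eigenvectorUnitary
    rw [Unitary.conjStarAlgAut_star_apply] at this
    exact this
  set σ : Fin D → ℝ := fun d => Real.sqrt (μ d) with hσ
  have hσpos : ∀ d, 0 < σ d := fun d => Real.sqrt_pos.mpr (hμpos d)
  have hreal : ∀ d, (σ d)⁻¹ * μ d = σ d := by
    intro d
    rw [inv_mul_eq_iff_eq_mul₀ (hσpos d).ne']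
    exact (Real.mul_self_sqrt (hμpos d).le).symm
  set s : Fin D → ℂ := fun d => (((σ d)⁻¹ : ℝ) : ℂ) with hs
  set V : Matrix (Fin M) (Fin D) ℂ := B * Q with hV
  set U : Matrix (Fin N) (Fin D) ℂ := C * Q * Matrix.diagonal s with hU
  have hUH : Uᴴ = Matrix.diagonal s * Qᴴ * Cᴴ := by
    rw [hU, Matrix.conjTranspose_mul, Matrix.conjTranspose_mul, Matrix.diagonal_conjTranspose]
    have : star s = s := by
      funext d; simp [hs, Complex.star_def, Complex.conj_ofReal]
    rw [this, Matrix.mul_assoc]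
  have hUHV : Uᴴ * H * V = Matrix.diagonal (fun d => (σ d : ℂ)) := by
    have e1 : Uᴴ * H * V = Matrix.diagonal s * (Qᴴ * (Cᴴ * C) * Q) := by
      rw [hUH, hV, hC]
      simp only [Matrix.mul_assoc]
    rw [e1, hdiagP, Matrix.diagonal_mul_diagonal]
    have key : ∀ d, s d * (μ d : ℂ) = (σ d : ℂ) := by
      intro d
      rw [hs, ← Complex.ofReal_mul, hreal d]
    rw [funext key]
  have hVV : V * Vᴴ = B * Bᴴ := by
    rw [hV, Matrix.conjTranspose_mul, Matrix.mul_assoc, ← Matrix.mul_assoc Q, hQ2, Matrix.one_mul]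
  have hUU : Uᴴ * U = 1 := by
    have e1 : Uᴴ * U = Matrix.diagonal s * (Qᴴ * (Cᴴ * C) * Q) * Matrix.diagonal s := by
      rw [hUH, hU]
      simp only [Matrix.mul_assoc]
    rw [e1, hdiagP, Matrix.diagonal_mul_diagonal, Matrix.diagonal_mul_diagonal,
      ← Matrix.diagonal_one]
    have key : ∀ d, s d * (μ d : ℂ) * s d = 1 := by
      intro d
      rw [hs, ← Complex.ofReal_mul, hreal d, ← Complex.ofReal_mul,
        mul_inv_cancel₀ (hσpos d).ne', Complex.ofReal_one]
    rw [funext key]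
  refine ⟨V, U, ⟨σ, hσpos, hUHV⟩, by rw [hVV, hBB], ?_⟩
  -- numerator of each term
  have hdot : ∀ d, star (fun i => U i d) ⬝ᵥ (H *ᵥ fun j => V j d) = (Uᴴ * H * V) d d := by
    intro d
    simp only [dotProduct, Matrix.mulVec, Matrix.mul_apply, Matrix.conjTranspose_apply,
      dotProduct, Pi.star_apply, Finset.sum_mul, Finset.mul_sum]
    rw [Finset.sum_comm]
    exact Finset.sum_congr rfl fun i _ => Finset.sum_congr rfl fun j _ => by ring
  have hden : ∀ d, (∑ i, ‖U i d‖ ^ 2 : ℝ) = 1 := by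
    intro d
    have h1 : ((∑ i, ‖U i d‖ ^ 2 : ℝ) : ℂ) = (Uᴴ * U) d d := by
      rw [Matrix.mul_apply]
      push_cast
      refine Finset.sum_congr rfl fun i _ => ?_
      rw [Matrix.conjTranspose_apply, mul_comm, Complex.star_def, Complex.mul_conj,
        ← Complex.ofReal_pow, Complex.sq_norm]
    rw [hUU, Matrix.one_apply_eq] at h1
    exact_mod_cast h1
  -- RHS determinant
  have hCC : H * Sx * Hᴴ = C * Cᴴ := by
    rw [← hBB, hC, Matrix.conjTranspose_mul]
    simp only [Matrix.mul_assoc]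
  have hdet : (1 + H * Sx * Hᴴ).det = ((∏ d, (1 + μ d) : ℝ) : ℂ) := by
    rw [hCC, Matrix.det_one_add_mul_comm]
    have hspecP : Cᴴ * C = Q * Matrix.diagonal (fun d => (μ d : ℂ)) * Qᴴ := by
      calc Cᴴ * C = (Q * Qᴴ) * (Cᴴ * C) * (Q * Qᴴ) := by
            rw [hQ2, Matrix.one_mul, Matrix.mul_one]
        _ = Q * (Qᴴ * (Cᴴ * C) * Q) * Qᴴ := by simp only [Matrix.mul_assoc]
        _ = Q * Matrix.diagonal (fun d => (μ d : ℂ)) * Qᴴ := by rw [hdiagP]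
    have hdg : Matrix.diagonal (fun d => ((1 + μ d : ℝ) : ℂ))
        = 1 + Matrix.diagonal (fun d => (μ d : ℂ)) := by
      have e2 : (fun d => ((1 + μ d : ℝ) : ℂ)) = fun d => (1 : ℂ) + (μ d : ℂ) := by
        funext d; push_cast; rfl
      rw [e2, ← Matrix.diagonal_add, Matrix.diagonal_one]
    have h1 : (1 : Matrix (Fin D) (Fin D) ℂ) + Cᴴ * C
        = Q * (Matrix.diagonal (fun d => ((1 + μ d : ℝ) : ℂ))) * Qᴴ := by
      rw [hdg, Matrix.mul_add, Matrix.mul_one, Matrix.add_mul, hQ2, ← hspecP]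
    have hdQ : Q.det * Qᴴ.det = 1 := by rw [← Matrix.det_mul, hQ2, Matrix.det_one]
    rw [h1, Matrix.det_mul, Matrix.det_mul, Matrix.det_diagonal]
    calc Q.det * (∏ d, ((1 + μ d : ℝ) : ℂ)) * Qᴴ.det
        = (Q.det * Qᴴ.det) * ∏ d, ((1 + μ d : ℝ) : ℂ) := by ring
      _ = ((∏ d, (1 + μ d) : ℝ) : ℂ) := by rw [hdQ, one_mul]; push_cast; rfl
  have hre : (1 + H * Sx * Hᴴ).det.re = ∏ d, (1 + μ d) := by
    rw [hdet, Complex.ofReal_re]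
  have hterm : ∀ d : Fin D,
      1 + ‖star (fun i => U i d) ⬝ᵥ (H *ᵥ fun j => V j d)‖ ^ 2 / (∑ i, ‖U i d‖ ^ 2)
        = 1 + μ d := by
    intro d
    rw [hden d, div_one, hdot d, hUHV, Matrix.diagonal_apply_eq, Complex.norm_real,
      Real.norm_eq_abs, abs_of_pos (hσpos d), hσ]
    rw [Real.sq_sqrt (hμpos d).le]
  have hne : ∀ d ∈ Finset.univ, (1 : ℝ) + μ d ≠ 0 :=
    fun d _ => ne_of_gt (by linarith [hμpos d])
  rw [hre, Real.logb, Real.log_prod hne, Finset.sum_div]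
  exact Finset.sum_congr rfl fun d _ => by rw [Real.logb, hterm d]
end
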